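/- Let Y be a nonnegative integer-valued random variable with finite second moment, conditioned on an event A, and let Y' be its binomial thinning with retention probability p_d ∈ (0,1]. Define θ₁ = E[Y | A], θ₃ = Var[Y | A]/θ₁² − 1/θ₁, and analogously θ₁', θ₃' for Y'. Then θ₁' = p_d θ₁ and θ₃' = θ₃; i.e., binomial thinning scales the mean by p_d and leaves the excess relative variance with respect to a Poisson distribution unchanged. -/

import Mathlib

open Finset

lemma binom_sum0 (p q : ℝ) (hpq : p + q = 1) (n : ℕ) :
    ∑ k ∈ range (n+1), (n.choose k : ℝ) * p^k * q^(n-k) = 1 := by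
  have h := add_pow p q n
  rw [hpq, one_pow] at h
  conv_rhs => rw [h]
  exact Finset.sum_congr rfl (fun k _ => by ring)

lemma binom_sum1 (p q : ℝ) (hpq : p + q = 1) (n : ℕ) :
    ∑ k ∈ range (n+1), (k : ℝ) * (n.choose k : ℝ) * p^k * q^(n-k) = n * p := by
  cases n with
  | zero => simp
  | succ m =>
    rw [Finset.sum_range_succ']
    have key : ∀ i ∈ range (m+1), ((i+1 : ℕ) : ℝ) * ((m+1).choose (i+1) : ℝ) * p^(i+1) * q^(m+1-(i+1))
        = ((m+1 : ℕ) : ℝ) * p * ((m.choose i : ℝ) * p^i * q^(m-i)) := by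
      intro i _
      have h2 : ((m+1) * m.choose i : ℕ) = ((m+1).choose (i+1) * (i+1) : ℕ) :=
        Nat.add_one_mul_choose_eq m i
      have h3 : ((m+1 : ℝ)) * (m.choose i : ℝ) = ((m+1).choose (i+1) : ℝ) * ((i+1 : ℝ)) := by
        exact_mod_cast congrArg (Nat.cast : ℕ → ℝ) h2
      have he : m + 1 - (i + 1) = m - i := by omega
      rw [he]
      push_cast
      linear_combination (p^(i+1) * q^(m-i)) * h3.symm
    rw [Finset.sum_congr rfl key, ← Finset.mul_sum, binom_sum0 p q hpq m]
    push_cast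
    ring

lemma binom_sum2 (p q : ℝ) (hpq : p + q = 1) (n : ℕ) :
    ∑ k ∈ range (n+1), (k : ℝ) * ((k : ℝ) - 1) * (n.choose k : ℝ) * p^k * q^(n-k)
      = (n : ℝ) * ((n : ℝ) - 1) * p^2 := by
  match n with
  | 0 => simp
  | 1 => simp [Finset.sum_range_succ]
  | (m+2) =>
    rw [Finset.sum_range_succ', Finset.sum_range_succ']
    have key : ∀ j ∈ range (m+1),
        ((j+1+1 : ℕ) : ℝ) * (((j+1+1 : ℕ) : ℝ) - 1) * ((m+2).choose (j+1+1) : ℝ) * p^(j+1+1) * q^(m+2-(j+1+1))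
        = ((m+2 : ℕ) : ℝ) * ((m+1 : ℕ) : ℝ) * p^2 * ((m.choose j : ℝ) * p^j * q^(m-j)) := by
      intro j _
      have h1 : ((m+2) * (m+1).choose (j+1) : ℕ) = ((m+2).choose (j+2) * (j+2) : ℕ) :=
        Nat.add_one_mul_choose_eq (m+1) (j+1)
      have h2 : ((m+1) * m.choose j : ℕ) = ((m+1).choose (j+1) * (j+1) : ℕ) :=
        Nat.add_one_mul_choose_eq m j
      have h1' : ((m+2 : ℝ)) * ((m+1).choose (j+1) : ℝ) = ((m+2).choose (j+2) : ℝ) * ((j:ℝ)+2) := by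
        exact_mod_cast congrArg (Nat.cast : ℕ → ℝ) h1
      have h2' : ((m+1 : ℝ)) * (m.choose j : ℝ) = ((m+1).choose (j+1) : ℝ) * ((j:ℝ)+1) := by
        exact_mod_cast congrArg (Nat.cast : ℕ → ℝ) h2
      have he : m + 2 - (j+1+1) = m - j := by omega
      rw [he]
      push_cast
      linear_combination (p^(j+2)*q^(m-j)*((j:ℝ)+1)) * h1'.symm + (p^(j+2)*q^(m-j)*((m:ℝ)+2)) * h2'.symm
    rw [Finset.sum_congr rfl key, ← Finset.mul_sum, binom_sum0 p q hpq m]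
    push_cast
    ring

open MeasureTheory ProbabilityTheory Finset
open scoped ENNReal

lemma lintegral_nat_rv {Ω : Type*} [MeasurableSpace Ω] (μ : Measure Ω)
    (X : Ω → ℕ) (hX : Measurable X) (f : ℕ → ℝ≥0∞) :
    ∫⁻ ω, f (X ω) ∂μ = ∑' n, f n * μ {ω | X ω = n} := by
  have hf : Measurable f := measurable_of_countable f
  rw [← lintegral_map hf hX, lintegral_countable' f]
  congr 1
  ext n
  rw [Measure.map_apply hX (measurableSet_singleton n)]
  rfl

lemma measure_eq_tsum_joint {Ω : Type*} [MeasurableSpace Ω] (μ : Measure Ω)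
    (Y Y' : Ω → ℕ) (hY : Measurable Y) (hY' : Measurable Y') (k : ℕ) :
    μ {ω | Y' ω = k} = ∑' n, μ {ω | Y' ω = k ∧ Y ω = n} := by
  have hset : {ω | Y' ω = k} = ⋃ n, {ω | Y' ω = k ∧ Y ω = n} := by
    ext ω; simp
  rw [hset, measure_iUnion]
  · intro m n hmn
    simp only [Set.disjoint_left]
    rintro ω ⟨_, h1⟩ ⟨_, h2⟩
    exact hmn (h1 ▸ h2 ▸ rfl)
  · intro n
    exact (hY' (measurableSet_singleton k)).inter (hY (measurableSet_singleton n))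

lemma thin_lintegral {Ω : Type*} [MeasurableSpace Ω] (μ : Measure Ω)
    (Y Y' : Ω → ℕ) (hY : Measurable Y) (hY' : Measurable Y')
    (pd : ℝ) (hpd0 : 0 ≤ pd) (hpd1 : pd ≤ 1)
    (hthin : ∀ n k : ℕ, μ {ω | Y' ω = k ∧ Y ω = n} =
      μ {ω | Y ω = n} * ENNReal.ofReal ((n.choose k : ℝ) * pd ^ k * (1 - pd) ^ (n - k)))
    (g : ℕ → ℝ) (hg : ∀ k, 0 ≤ g k) :
    ∫⁻ ω, ENNReal.ofReal (g (Y' ω)) ∂μ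
      = ∑' n, μ {ω | Y ω = n} *
          ENNReal.ofReal (∑ k ∈ Finset.range (n+1),
            g k * ((n.choose k : ℝ) * pd ^ k * (1 - pd) ^ (n - k))) := by
  have hb : ∀ n k, 0 ≤ (n.choose k : ℝ) * pd ^ k * (1 - pd) ^ (n - k) := fun n k => by
    have : (0:ℝ) ≤ 1 - pd := by linarith
    positivity
  rw [lintegral_nat_rv μ Y' hY' (fun k => ENNReal.ofReal (g k))]
  calc ∑' k, ENNReal.ofReal (g k) * μ {ω | Y' ω = k}
      = ∑' k, ∑' n, μ {ω | Y ω = n} *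
          ENNReal.ofReal (g k * ((n.choose k : ℝ) * pd ^ k * (1 - pd) ^ (n - k))) := by
        refine tsum_congr fun k => ?_
        rw [measure_eq_tsum_joint μ Y Y' hY hY' k, ← ENNReal.tsum_mul_left]
        refine tsum_congr fun n => ?_
        rw [hthin n k, ENNReal.ofReal_mul (hg k)]
        ring
    _ = ∑' n, ∑' k, μ {ω | Y ω = n} *
          ENNReal.ofReal (g k * ((n.choose k : ℝ) * pd ^ k * (1 - pd) ^ (n - k))) :=
        ENNReal.tsum_comm
    _ = _ := by
        refine tsum_congr fun n => ?_
        rw [ENNReal.tsum_mul_left]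
        congr 1
        rw [tsum_eq_sum (s := Finset.range (n+1)) ?_]
        · rw [ENNReal.ofReal_sum_of_nonneg fun k _ => mul_nonneg (hg k) (hb n k)]
        · intro k hk
          have hkn : n < k := by simpa using hk
          have : n.choose k = 0 := Nat.choose_eq_zero_of_lt hkn
          simp [this]

open MeasureTheory ProbabilityTheory Finset
open scoped ENNReal

lemma thin_moments {Ω : Type*} [MeasurableSpace Ω] (μ : Measure Ω)
    (Y Y' : Ω → ℕ) (hY : Measurable Y) (hY' : Measurable Y')
    (pd : ℝ) (hpd0 : 0 ≤ pd) (hpd1 : pd ≤ 1)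
    (hthin : ∀ n k : ℕ, μ {ω | Y' ω = k ∧ Y ω = n} =
      μ {ω | Y ω = n} * ENNReal.ofReal ((n.choose k : ℝ) * pd ^ k * (1 - pd) ^ (n - k))) :
    (∫⁻ ω, ENNReal.ofReal ((Y' ω : ℝ)) ∂μ
      = ENNReal.ofReal pd * ∫⁻ ω, ENNReal.ofReal ((Y ω : ℝ)) ∂μ) ∧
    (∫⁻ ω, ENNReal.ofReal ((Y' ω : ℝ) ^ 2) ∂μ
      = ENNReal.ofReal (pd ^ 2) * ∫⁻ ω, ENNReal.ofReal ((Y ω : ℝ) ^ 2) ∂μ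
        + ENNReal.ofReal (pd * (1 - pd)) * ∫⁻ ω, ENNReal.ofReal ((Y ω : ℝ)) ∂μ) := by
  have hq : pd + (1 - pd) = 1 := by ring
  constructor
  · rw [thin_lintegral μ Y Y' hY hY' pd hpd0 hpd1 hthin (fun k => (k : ℝ))
        (fun k => Nat.cast_nonneg k),
      lintegral_nat_rv μ Y hY (fun n => ENNReal.ofReal (n : ℝ)),
      ← ENNReal.tsum_mul_left]
    refine tsum_congr fun n => ?_
    have hs : ∑ k ∈ range (n+1), (k : ℝ) * ((n.choose k : ℝ) * pd ^ k * (1 - pd) ^ (n - k))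
        = (n : ℝ) * pd := by
      rw [Finset.sum_congr rfl (fun k _ => by ring :
        ∀ k ∈ range (n+1), (k : ℝ) * ((n.choose k : ℝ) * pd ^ k * (1 - pd) ^ (n - k))
          = (k : ℝ) * (n.choose k : ℝ) * pd ^ k * (1 - pd) ^ (n - k))]
      exact binom_sum1 pd (1 - pd) hq n
    rw [hs, ENNReal.ofReal_mul (Nat.cast_nonneg n)]
    ring
  · rw [thin_lintegral μ Y Y' hY hY' pd hpd0 hpd1 hthin (fun k => (k : ℝ) ^ 2)
        (fun k => by positivity),
      lintegral_nat_rv μ Y hY (fun n => ENNReal.ofReal ((n : ℝ) ^ 2)),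
      lintegral_nat_rv μ Y hY (fun n => ENNReal.ofReal (n : ℝ)),
      ← ENNReal.tsum_mul_left, ← ENNReal.tsum_mul_left, ← ENNReal.tsum_add]
    refine tsum_congr fun n => ?_
    have hs : ∑ k ∈ range (n+1), (k : ℝ) ^ 2 * ((n.choose k : ℝ) * pd ^ k * (1 - pd) ^ (n - k))
        = pd ^ 2 * (n : ℝ) ^ 2 + (pd * (1 - pd)) * (n : ℝ) := by
      rw [Finset.sum_congr rfl (fun k _ => by ring :
        ∀ k ∈ range (n+1), (k : ℝ) ^ 2 * ((n.choose k : ℝ) * pd ^ k * (1 - pd) ^ (n - k))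
          = (k : ℝ) * ((k : ℝ) - 1) * (n.choose k : ℝ) * pd ^ k * (1 - pd) ^ (n - k)
            + (k : ℝ) * (n.choose k : ℝ) * pd ^ k * (1 - pd) ^ (n - k)),
        Finset.sum_add_distrib, binom_sum1 pd (1 - pd) hq n, binom_sum2 pd (1 - pd) hq n]
      ring
    rw [hs, ENNReal.ofReal_add (by positivity)
        (mul_nonneg (mul_nonneg hpd0 (by linarith)) (Nat.cast_nonneg n)),
      ENNReal.ofReal_mul (by positivity : (0:ℝ) ≤ pd ^ 2),
      ENNReal.ofReal_mul (mul_nonneg hpd0 (by linarith))]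
    ring
/-- Binomial thinning with retention probability `p_d` scales the conditional
mean by `p_d` and leaves the excess relative variance w.r.t. Poisson
(`θ₃ = Var/θ₁² - 1/θ₁`) unchanged. -/
theorem thinning_moment_parameters
    {Ω : Type*} [MeasurableSpace Ω] (P : Measure Ω) [IsProbabilityMeasure P]
    (Y Y' : Ω → ℕ) (hYmeas : Measurable Y) (hY'meas : Measurable Y')
    (A : Set Ω) (hA : MeasurableSet A) (hApos : P A ≠ 0)
    (pd : ℝ) (hpd0 : 0 < pd) (hpd1 : pd ≤ 1)
    (hY2 : Integrable (fun ω => ((Y ω : ℝ)) ^ 2) (P[|A]))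
    (hthin : ∀ n k : ℕ, (P[|A]) {ω | Y' ω = k ∧ Y ω = n} =
      (P[|A]) {ω | Y ω = n} *
        ENNReal.ofReal ((n.choose k : ℝ) * pd ^ k * (1 - pd) ^ (n - k))) :
    (∫ ω, (Y' ω : ℝ) ∂(P[|A])) = pd * ∫ ω, (Y ω : ℝ) ∂(P[|A]) ∧
    variance (fun ω => (Y' ω : ℝ)) (P[|A]) / (∫ ω, (Y' ω : ℝ) ∂(P[|A])) ^ 2
        - 1 / (∫ ω, (Y' ω : ℝ) ∂(P[|A]))
      = variance (fun ω => (Y ω : ℝ)) (P[|A]) / (∫ ω, (Y ω : ℝ) ∂(P[|A])) ^ 2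
        - 1 / (∫ ω, (Y ω : ℝ) ∂(P[|A])) := by
  set μ := P[|A] with hμ
  haveI : IsProbabilityMeasure μ := cond_isProbabilityMeasure hApos
  have hq0 : (0:ℝ) ≤ 1 - pd := by linarith
  -- measurability of real-valued versions
  have hYr : Measurable fun ω => ((Y ω : ℝ)) := measurable_from_nat.comp hYmeas
  have hY'r : Measurable fun ω => ((Y' ω : ℝ)) := measurable_from_nat.comp hY'meas
  -- lintegral moments
  obtain ⟨h1, h2⟩ := thin_moments μ Y Y' hYmeas hY'meas pd hpd0.le hpd1 hthin
  -- finiteness facts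
  have hnn : ∀ ω, (0:ℝ) ≤ (Y ω : ℝ) := fun ω => Nat.cast_nonneg _
  have hofReal_sq : ∀ (X : Ω → ℕ) (ω : Ω),
      ‖((X ω : ℝ)) ^ 2‖ₑ = ENNReal.ofReal (((X ω : ℝ)) ^ 2) := fun X ω => by
    rw [← Real.enorm_eq_ofReal (by positivity)]
  have hofReal : ∀ (X : Ω → ℕ) (ω : Ω),
      ‖((X ω : ℝ))‖ₑ = ENNReal.ofReal ((X ω : ℝ)) := fun X ω => by
    rw [← Real.enorm_eq_ofReal (Nat.cast_nonneg _)]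
  have hLY2 : ∫⁻ ω, ENNReal.ofReal (((Y ω : ℝ)) ^ 2) ∂μ ≠ ∞ := by
    have := hY2.2
    rw [HasFiniteIntegral] at this
    simp_rw [← hofReal_sq Y]
    exact this.ne
  have hYint : Integrable (fun ω => ((Y ω : ℝ))) μ := by
    refine Integrable.mono' (hY2.add (integrable_const 1)) hYr.aestronglyMeasurable ?_
    refine Filter.Eventually.of_forall fun ω => ?_
    simp only [Pi.add_apply]
    rw [Real.norm_of_nonneg (hnn ω)]
    nlinarith [sq_nonneg ((Y ω : ℝ) - 1)]
  have hLY : ∫⁻ ω, ENNReal.ofReal ((Y ω : ℝ)) ∂μ ≠ ∞ := by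
    have := hYint.2
    rw [HasFiniteIntegral] at this
    simp_rw [← hofReal Y]
    exact this.ne
  have hLY' : ∫⁻ ω, ENNReal.ofReal ((Y' ω : ℝ)) ∂μ ≠ ∞ := by
    rw [h1]; exact ENNReal.mul_ne_top ENNReal.ofReal_ne_top hLY
  have hLY'2 : ∫⁻ ω, ENNReal.ofReal (((Y' ω : ℝ)) ^ 2) ∂μ ≠ ∞ := by
    rw [h2]
    exact ENNReal.add_ne_top.2 ⟨ENNReal.mul_ne_top ENNReal.ofReal_ne_top hLY2,
      ENNReal.mul_ne_top ENNReal.ofReal_ne_top hLY⟩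
  -- integrability of Y' and Y'^2
  have hY'2int : Integrable (fun ω => ((Y' ω : ℝ)) ^ 2) μ := by
    refine ⟨(hY'r.pow_const 2).aestronglyMeasurable, ?_⟩
    rw [HasFiniteIntegral]
    simp_rw [hofReal_sq Y']
    exact hLY'2.lt_top
  have hY'int : Integrable (fun ω => ((Y' ω : ℝ))) μ := by
    refine ⟨hY'r.aestronglyMeasurable, ?_⟩
    rw [HasFiniteIntegral]
    simp_rw [hofReal Y']
    exact hLY'.lt_top
  -- real integrals via lintegrals
  have hEY : ∫ ω, ((Y ω : ℝ)) ∂μ = (∫⁻ ω, ENNReal.ofReal ((Y ω : ℝ)) ∂μ).toReal :=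
    integral_eq_lintegral_of_nonneg_ae (Filter.Eventually.of_forall hnn)
      hYr.aestronglyMeasurable
  have hEY' : ∫ ω, ((Y' ω : ℝ)) ∂μ = (∫⁻ ω, ENNReal.ofReal ((Y' ω : ℝ)) ∂μ).toReal :=
    integral_eq_lintegral_of_nonneg_ae (Filter.Eventually.of_forall fun ω => Nat.cast_nonneg _)
      hY'r.aestronglyMeasurable
  have hEY2 : ∫ ω, ((Y ω : ℝ)) ^ 2 ∂μ = (∫⁻ ω, ENNReal.ofReal (((Y ω : ℝ)) ^ 2) ∂μ).toReal :=
    integral_eq_lintegral_of_nonneg_ae (Filter.Eventually.of_forall fun ω => by positivity)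
      (hYr.pow_const 2).aestronglyMeasurable
  have hEY'2 : ∫ ω, ((Y' ω : ℝ)) ^ 2 ∂μ = (∫⁻ ω, ENNReal.ofReal (((Y' ω : ℝ)) ^ 2) ∂μ).toReal :=
    integral_eq_lintegral_of_nonneg_ae (Filter.Eventually.of_forall fun ω => by positivity)
      (hY'r.pow_const 2).aestronglyMeasurable
  -- first moment relation in ℝ
  have hm : ∫ ω, ((Y' ω : ℝ)) ∂μ = pd * ∫ ω, ((Y ω : ℝ)) ∂μ := by
    rw [hEY', hEY, h1, ENNReal.toReal_mul, ENNReal.toReal_ofReal hpd0.le]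
  -- second moment relation in ℝ
  have hm2 : ∫ ω, ((Y' ω : ℝ)) ^ 2 ∂μ
      = pd ^ 2 * ∫ ω, ((Y ω : ℝ)) ^ 2 ∂μ + pd * (1 - pd) * ∫ ω, ((Y ω : ℝ)) ∂μ := by
    rw [hEY'2, hEY2, hEY, h2,
      ENNReal.toReal_add (ENNReal.mul_ne_top ENNReal.ofReal_ne_top hLY2)
        (ENNReal.mul_ne_top ENNReal.ofReal_ne_top hLY),
      ENNReal.toReal_mul, ENNReal.toReal_mul, ENNReal.toReal_ofReal (by positivity),
      ENNReal.toReal_ofReal (mul_nonneg hpd0.le hq0)]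
  refine ⟨hm, ?_⟩
  -- variances
  have hmem : MemLp (fun ω => ((Y ω : ℝ))) 2 μ :=
    (memLp_two_iff_integrable_sq hYr.aestronglyMeasurable).2 hY2
  have hmem' : MemLp (fun ω => ((Y' ω : ℝ))) 2 μ :=
    (memLp_two_iff_integrable_sq hY'r.aestronglyMeasurable).2 hY'2int
  have hvar : variance (fun ω => ((Y ω : ℝ))) μ
      = ∫ ω, ((Y ω : ℝ)) ^ 2 ∂μ - (∫ ω, ((Y ω : ℝ)) ∂μ) ^ 2 := by
    rw [variance_eq_sub hmem]; rfl
  have hvar' : variance (fun ω => ((Y' ω : ℝ))) μ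
      = ∫ ω, ((Y' ω : ℝ)) ^ 2 ∂μ - (∫ ω, ((Y' ω : ℝ)) ∂μ) ^ 2 := by
    rw [variance_eq_sub hmem']; rfl
  set m := ∫ ω, ((Y ω : ℝ)) ∂μ with hmdef
  set E2 := ∫ ω, ((Y ω : ℝ)) ^ 2 ∂μ with hE2def
  rw [hvar, hvar', hm, hm2]
  by_cases hm0 : m = 0
  · simp [hm0]
  · have hpdne : pd ≠ 0 := hpd0.ne'
    field_simp
    ring
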